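/- arXiv:0806.0914 — 2 statements merged into one kernel-verified Lean document; each statement's English description precedes it below -/
import Mathlib

section
/- Monotonicity of φ̄_∞ under domination. Let k ≥ 2 and let (α,β), (α′,β′) satisfy α, α′ ∈ [0,1], β, β′ ≥ 1, α+β−k+1 ∈ [0,1] and α′+β′−k+1 ∈ [0,1]. Suppose φ̄^{α,β}(t) ≥ φ̄^{α′,β′}(t) for all t ∈ [0,k], with strict inequality for at least one s ∈ [0,k] (φ̄^{α,β} dominates φ̄^{α′,β′}). Then φ̄_∞^{α,β}(x) ≥ φ̄_∞^{α′,β′}(x) for every x ∈ A^ℕ, and this inequality is strict whenever 0 < φ̄_∞^{α,β}(x) < 1 or 0 < φ̄_∞^{α′,β′}(x) < 1. -/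
open Filter Set

/-- The shift map on one-sided sequences. -/
def shft (x : ℕ → ℕ) : ℕ → ℕ := fun n => x (n + 1)

/-- Strict lexicographic order on one-sided sequences:
`x ≺ y` iff they differ and `x m < y m` at the first index `m` where they differ. -/
def lexLt (x y : ℕ → ℕ) : Prop := ∃ m, (∀ i, i < m → x i = y i) ∧ x m < y m

/-- Lexicographic order `x ≼ y` on one-sided sequences. -/
def lexLe (x y : ℕ → ℕ) : Prop := x = y ∨ lexLt x y

/-- The map `φ̄^{α,β} : ℝ → [0,1]`:  `0` for `t ≤ α`, `(t-α)/β` for `α ≤ t ≤ α+β`,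
`1` for `t ≥ α+β`. -/
noncomputable def phiB (α β t : ℝ) : ℝ :=
  if t ≤ α then 0 else if α + β ≤ t then 1 else (t - α) / β

/-- `φ̄ₙ^{α,β}(x) = φ̄^{α,β}(x₀ + φ̄^{α,β}(x₁ + ⋯ + φ̄^{α,β}(x_{n-1})⋯))`. -/
noncomputable def phiBN (α β : ℝ) : ℕ → (ℕ → ℕ) → ℝ
  | 0, _ => 0
  | n + 1, x => phiB α β (x 0 + phiBN α β n (shft x))

/-- `φ̄_∞^{α,β}(x) = limₙ φ̄ₙ^{α,β}(x)`; the sequence `φ̄ₙ^{α,β}(x)` is nondecreasing in `n`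
and bounded, so its limit is its supremum. -/
noncomputable def phiBInf (α β : ℝ) (x : ℕ → ℕ) : ℝ := ⨆ n, phiBN α β n x

/-- `T̂_{α,β}(x) = βx + α − ⌊βx + α⌋`. -/
noncomputable def Tlow (α β x : ℝ) : ℝ := β * x + α - ⌊β * x + α⌋

/-- `Ť_{α,β}(x) = βx + α + 1 − ⌈βx + α⌉`. -/
noncomputable def Thigh (α β x : ℝ) : ℝ := β * x + α + 1 - ⌈β * x + α⌉

/-- `k = ⌈α + β⌉`, the size of the alphabet `A = {0, …, k-1}`. -/
noncomputable def kAB (α β : ℝ) : ℕ := (⌈α + β⌉).toNat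

/-- The string `u^{α,β}`, the coding of the orbit of `0`:
`u^{α,β}ₙ = ⌊β T̂ⁿ_{α,β}(0) + α⌋`. -/
noncomputable def uItin (α β : ℝ) : ℕ → ℕ := fun n => (⌊β * (Tlow α β)^[n] 0 + α⌋).toNat

/-- The string `v^{α,β}`, the coding of the orbit of `1`:
`v^{α,β}ₙ = ⌈β Ťⁿ_{α,β}(1) + α⌉ − 1`. -/
noncomputable def vItin (α β : ℝ) : ℕ → ℕ := fun n => (⌈β * (Thigh α β)^[n] 1 + α⌉ - 1).toNat

/-- The shift space `Σ(u,v) = {x ∈ A^ℕ : u ≼ σⁿx ≼ v for all n ≥ 0}`, `A = {0,…,k-1}`. -/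
def SigSet (k : ℕ) (u v : ℕ → ℕ) : Set (ℕ → ℕ) :=
  {x | (∀ i, x i < k) ∧ ∀ n, lexLe u (shft^[n] x) ∧ lexLe (shft^[n] x) v}

/-- The number of words of length `n` in the language of `Σ(u,v)` (prefixes of elements). -/
noncomputable def nWords (k : ℕ) (u v : ℕ → ℕ) (n : ℕ) : ℕ :=
  Nat.card {w : Fin n → ℕ // ∃ x ∈ SigSet k u v, ∀ i : Fin n, x i.1 = w i}

/-- The topological entropy (base 2) of `Σ(u,v)`:
`h = limₙ (1/n) log₂ card(Lₙ)` (the limit exists by subadditivity, so it equals the limsup;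
it is `0` when `Σ(u,v) = ∅`). -/
noncomputable def entS (k : ℕ) (u v : ℕ → ℕ) : ℝ :=
  Filter.limsup (fun n : ℕ => Real.logb 2 (nWords k u v n) / (n : ℝ)) Filter.atTop

/-- Concatenation of the word `w₀ ⋯ w_{p-1}` (the first `p` letters of `w`) with the
string `y`. -/
def wcat (p : ℕ) (w y : ℕ → ℕ) : ℕ → ℕ := fun n => if n < p then w n else y (n - p)

section Aux

lemma phiB_eq {α β : ℝ} (hβ : 0 < β) (t : ℝ) :
    phiB α β t = min 1 (max 0 ((t - α) / β)) := by
  unfold phiB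
  rcases le_or_gt t α with h | h
  · rw [if_pos h, max_eq_left (div_nonpos_of_nonpos_of_nonneg (by linarith) hβ.le),
      min_eq_right zero_le_one]
  · rw [if_neg (not_le.2 h)]
    rcases le_or_gt (α + β) t with h2 | h2
    · have h3 : (1:ℝ) ≤ (t - α) / β := (one_le_div hβ).2 (by linarith)
      rw [if_pos h2, max_eq_right (by linarith), min_eq_left h3]
    · have h3 : (t - α) / β < 1 := (div_lt_one hβ).2 (by linarith)
      have h4 : (0:ℝ) < (t - α) / β := div_pos (by linarith) hβ
      rw [if_neg (not_le.2 h2), max_eq_right h4.le, min_eq_right h3.le]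

lemma phiB_mono {α β : ℝ} (hβ : 0 < β) : Monotone (phiB α β) := by
  intro s t hst
  rw [phiB_eq hβ, phiB_eq hβ]
  gcongr

lemma phiB_nonneg {α β : ℝ} (hβ : 0 < β) (t : ℝ) : 0 ≤ phiB α β t := by
  rw [phiB_eq hβ]; exact le_min zero_le_one (le_max_left _ _)

lemma phiB_le_one {α β : ℝ} (hβ : 0 < β) (t : ℝ) : phiB α β t ≤ 1 := by
  rw [phiB_eq hβ]; exact min_le_left _ _

lemma phiB_cont {α β : ℝ} (hβ : 0 < β) : Continuous (phiB α β) := by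
  have : phiB α β = fun t => min 1 (max 0 ((t - α) / β)) := funext (phiB_eq hβ)
  rw [this]; fun_prop

lemma phiB_val {α β t : ℝ} (h1 : α < t) (h2 : t < α + β) : phiB α β t = (t - α) / β := by
  simp only [phiB, if_neg (not_le.2 h1), if_neg (not_le.2 h2)]

lemma phiBN_nonneg {α β : ℝ} (hβ : 0 < β) : ∀ n x, 0 ≤ phiBN α β n x
  | 0, _ => le_refl 0
  | n + 1, x => phiB_nonneg hβ _

lemma phiBN_le_one {α β : ℝ} (hβ : 0 < β) : ∀ n x, phiBN α β n x ≤ 1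
  | 0, _ => zero_le_one
  | n + 1, x => phiB_le_one hβ _

lemma phiBN_succ_le {α β : ℝ} (hβ : 0 < β) : ∀ n x, phiBN α β n x ≤ phiBN α β (n + 1) x
  | 0, x => phiB_nonneg hβ _
  | n + 1, x => by
    show phiB α β (x 0 + phiBN α β n (shft x)) ≤ phiB α β (x 0 + phiBN α β (n+1) (shft x))
    exact phiB_mono hβ (by have := phiBN_succ_le (α := α) hβ n (shft x); linarith)

lemma phiBN_bdd {α β : ℝ} (hβ : 0 < β) (x : ℕ → ℕ) :
    BddAbove (Set.range fun n => phiBN α β n x) :=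
  ⟨1, by rintro _ ⟨n, rfl⟩; exact phiBN_le_one hβ n x⟩

lemma phiBInf_nonneg {α β : ℝ} (hβ : 0 < β) (x : ℕ → ℕ) : 0 ≤ phiBInf α β x :=
  le_ciSup_of_le (phiBN_bdd hβ x) 0 (le_refl 0)

lemma phiBInf_le_one {α β : ℝ} (hβ : 0 < β) (x : ℕ → ℕ) : phiBInf α β x ≤ 1 :=
  ciSup_le fun n => phiBN_le_one hβ n x

lemma phiBInf_fix {α β : ℝ} (hβ : 0 < β) (x : ℕ → ℕ) :
    phiBInf α β x = phiB α β (x 0 + phiBInf α β (shft x)) := by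
  have hb2 : BddAbove (Set.range fun n => phiBN α β (n + 1) x) :=
    ⟨1, by rintro _ ⟨n, rfl⟩; exact phiBN_le_one hβ (n + 1) x⟩
  have h1 : phiBInf α β x = ⨆ n, phiBN α β (n + 1) x := by
    refine le_antisymm (ciSup_le fun n => ?_) (ciSup_le fun n => ?_)
    · exact (phiBN_succ_le hβ n x).trans (le_ciSup hb2 n)
    · exact le_ciSup (phiBN_bdd hβ x) (n + 1)
  rw [h1]
  have hmono : Monotone fun t : ℝ => phiB α β (x 0 + t) :=
    fun a b h => phiB_mono hβ (by linarith)
  have hcont : ContinuousAt (fun t : ℝ => phiB α β (x 0 + t)) (⨆ n, phiBN α β n (shft x)) :=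
    ((phiB_cont hβ).comp (continuous_const.add continuous_id)).continuousAt
  have hmap := hmono.map_ciSup_of_continuousAt hcont (phiBN_bdd hβ (shft x))
  rw [show phiBInf α β (shft x) = ⨆ n, phiBN α β n (shft x) from rfl, hmap]
  exact iSup_congr fun n => rfl

lemma phiBN_dom (k : ℕ) {α β α' β' : ℝ} (hβ : 1 ≤ β) (hβ' : 1 ≤ β')
    (hdom : ∀ t ∈ Set.Icc (0 : ℝ) (k : ℝ), phiB α' β' t ≤ phiB α β t) :
    ∀ n (x : ℕ → ℕ), (∀ i, x i < k) → phiBN α' β' n x ≤ phiBN α β n x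
  | 0, _, _ => le_refl 0
  | n + 1, x, hx => by
    have hb : (0:ℝ) < β := by linarith
    have hb' : (0:ℝ) < β' := by linarith
    have h1 : phiBN α' β' n (shft x) ≤ phiBN α β n (shft x) :=
      phiBN_dom k hβ hβ' hdom n (shft x) (fun i => hx (i + 1))
    have hx0 : (x 0 : ℝ) + 1 ≤ (k : ℝ) := by exact_mod_cast hx 0
    have harg : (x 0 : ℝ) + phiBN α β n (shft x) ∈ Set.Icc (0 : ℝ) (k : ℝ) := by
      constructor
      · have := phiBN_nonneg (α := α) hb n (shft x); positivity
      · have := phiBN_le_one (α := α) hb n (shft x); linarith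
    calc phiBN α' β' (n + 1) x
        = phiB α' β' ((x 0 : ℝ) + phiBN α' β' n (shft x)) := rfl
      _ ≤ phiB α' β' ((x 0 : ℝ) + phiBN α β n (shft x)) := phiB_mono hb' (by linarith)
      _ ≤ phiB α β ((x 0 : ℝ) + phiBN α β n (shft x)) := hdom _ harg
      _ = phiBN α β (n + 1) x := rfl

lemma phiB_strict_pt (k : ℕ) {α β α' β' : ℝ}
    (hα : α ∈ Set.Icc (0 : ℝ) 1) (hα' : α' ∈ Set.Icc (0 : ℝ) 1)
    (hβ : 1 ≤ β) (hβ' : 1 ≤ β')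
    (hγ : α + β - k + 1 ∈ Set.Icc (0 : ℝ) 1)
    (hdom : ∀ t ∈ Set.Icc (0 : ℝ) (k : ℝ), phiB α' β' t ≤ phiB α β t)
    (hstrict : ∃ s ∈ Set.Icc (0 : ℝ) (k : ℝ), phiB α' β' s < phiB α β s)
    {t : ℝ} (ht : t ∈ Set.Icc (0 : ℝ) (k : ℝ))
    (h0 : 0 < phiB α β t) (h1 : phiB α β t < 1) :
    phiB α' β' t < phiB α β t := by
  have hb : (0:ℝ) < β := by linarith
  have hb' : (0:ℝ) < β' := by linarith
  by_contra hc
  have heq : phiB α' β' t = phiB α β t := le_antisymm (hdom t ht) (not_lt.1 hc)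
  have h0' : 0 < phiB α' β' t := heq ▸ h0
  have h1' : phiB α' β' t < 1 := heq ▸ h1
  have h2 : α < t := by
    by_contra h; push_neg at h
    simp only [phiB, if_pos h] at h0; exact lt_irrefl 0 h0
  have h3 : t < α + β := by
    by_contra h; push_neg at h
    simp only [phiB, if_neg (not_le.2 h2), if_pos h] at h1; exact lt_irrefl 1 h1
  have h2' : α' < t := by
    by_contra h; push_neg at h
    simp only [phiB, if_pos h] at h0'; exact lt_irrefl 0 h0'
  have h3' : t < α' + β' := by
    by_contra h; push_neg at h
    simp only [phiB, if_neg (not_le.2 h2'), if_pos h] at h1'; exact lt_irrefl 1 h1'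
  set t1 := (max α α' + t) / 2 with ht1def
  set t2 := (t + min (α + β) (α' + β')) / 2 with ht2def
  have hat : max α α' < t := max_lt h2 h2'
  have htb : t < min (α + β) (α' + β') := lt_min h3 h3'
  have ht1a : max α α' < t1 := by rw [ht1def]; linarith
  have ht1b : t1 < t := by rw [ht1def]; linarith
  have ht2a : t < t2 := by rw [ht2def]; linarith
  have ht2b : t2 < min (α + β) (α' + β') := by rw [ht2def]; linarith
  have hαk : α + β ≤ (k : ℝ) := by have := hγ.2; linarith
  have hmaxnn : (0:ℝ) ≤ max α α' := le_max_of_le_left hα.1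
  have hminle : min (α + β) (α' + β') ≤ α + β := min_le_left _ _
  have ht1mem : t1 ∈ Set.Icc (0 : ℝ) (k : ℝ) := ⟨by linarith, by linarith [ht.2]⟩
  have ht2mem : t2 ∈ Set.Icc (0 : ℝ) (k : ℝ) := ⟨by linarith [ht.1], by linarith⟩
  have e0 : (t - α) / β = (t - α') / β' := by
    rw [← phiB_val h2 h3, ← phiB_val h2' h3', heq]
  have d1 : (t1 - α') / β' ≤ (t1 - α) / β := by
    have := hdom t1 ht1mem
    rwa [phiB_val (lt_of_le_of_lt (le_max_left _ _) ht1a) (by linarith [min_le_left (α+β) (α'+β')]),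
      phiB_val (lt_of_le_of_lt (le_max_right _ _) ht1a) (by linarith [min_le_right (α+β) (α'+β')])] at this
  have d2 : (t2 - α') / β' ≤ (t2 - α) / β := by
    have := hdom t2 ht2mem
    rwa [phiB_val (lt_of_le_of_lt (le_max_left _ _) (hat.trans ht2a)) (by linarith [min_le_left (α+β) (α'+β')]),
      phiB_val (lt_of_le_of_lt (le_max_right _ _) (hat.trans ht2a)) (by linarith [min_le_right (α+β) (α'+β')])] at this
  rw [div_le_div_iff₀ hb' hb] at d1 d2
  rw [div_eq_div_iff hb.ne' hb'.ne'] at e0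
  have hd1 : (t1 - t) * (β - β') ≤ 0 := by nlinarith [d1, e0]
  have hd2 : (t2 - t) * (β - β') ≤ 0 := by nlinarith [d2, e0]
  have hbb : β = β' := by nlinarith [hd1, hd2, ht1b, ht2a]
  have haa : α = α' := by
    rw [← hbb] at e0
    have h := mul_right_cancel₀ (ne_of_gt hb) e0
    linarith
  obtain ⟨s, _, hlt⟩ := hstrict
  rw [← haa, ← hbb] at hlt
  exact lt_irrefl _ hlt

end Aux

/-- **Monotonicity of `φ̄_∞` under domination.** Let `k ≥ 2` and suppose
`α, α′ ∈ [0,1]`, `β, β′ ≥ 1`, `α+β−k+1 ∈ [0,1]`, `α′+β′−k+1 ∈ [0,1]`, and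
`φ̄^{α,β}` dominates `φ̄^{α′,β′}` (i.e. `φ̄^{α,β}(t) ≥ φ̄^{α′,β′}(t)` on `[0,k]`, with
strict inequality somewhere). Then `φ̄_∞^{α,β}(x) ≥ φ̄_∞^{α′,β′}(x)` for every
`x ∈ A^ℕ`, with strict inequality whenever `0 < φ̄_∞^{α,β}(x) < 1` or
`0 < φ̄_∞^{α′,β′}(x) < 1`. -/
theorem phiInf_monotone_of_dominates (k : ℕ) (hk : 2 ≤ k) (α β α' β' : ℝ)
    (hα : α ∈ Set.Icc (0 : ℝ) 1) (hα' : α' ∈ Set.Icc (0 : ℝ) 1)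
    (hβ : 1 ≤ β) (hβ' : 1 ≤ β')
    (hγ : α + β - k + 1 ∈ Set.Icc (0 : ℝ) 1)
    (hγ' : α' + β' - k + 1 ∈ Set.Icc (0 : ℝ) 1)
    (hdom : ∀ t ∈ Set.Icc (0 : ℝ) (k : ℝ), phiB α' β' t ≤ phiB α β t)
    (hstrict : ∃ s ∈ Set.Icc (0 : ℝ) (k : ℝ), phiB α' β' s < phiB α β s) :
    ∀ x : ℕ → ℕ, (∀ i, x i < k) →
      phiBInf α' β' x ≤ phiBInf α β x ∧
      (((0 < phiBInf α β x ∧ phiBInf α β x < 1) ∨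
        (0 < phiBInf α' β' x ∧ phiBInf α' β' x < 1)) →
        phiBInf α' β' x < phiBInf α β x) := by
  intro x hx
  have hb : (0:ℝ) < β := by linarith
  have hb' : (0:ℝ) < β' := by linarith
  have hle : phiBInf α' β' x ≤ phiBInf α β x :=
    ciSup_le fun n => (phiBN_dom k hβ hβ' hdom n x hx).trans (le_ciSup (phiBN_bdd hb x) n)
  refine ⟨hle, ?_⟩
  intro hcase
  have hx' : ∀ i, shft x i < k := fun i => hx (i + 1)
  have hx0 : (x 0 : ℝ) + 1 ≤ (k : ℝ) := by exact_mod_cast hx 0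
  have hle' : phiBInf α' β' (shft x) ≤ phiBInf α β (shft x) :=
    ciSup_le fun n => (phiBN_dom k hβ hβ' hdom n (shft x) hx').trans
      (le_ciSup (phiBN_bdd hb (shft x)) n)
  have hfix : phiBInf α β x = phiB α β ((x 0 : ℝ) + phiBInf α β (shft x)) := phiBInf_fix hb x
  have hfix' : phiBInf α' β' x = phiB α' β' ((x 0 : ℝ) + phiBInf α' β' (shft x)) :=
    phiBInf_fix hb' x
  set t := (x 0 : ℝ) + phiBInf α β (shft x) with htdef
  set t' := (x 0 : ℝ) + phiBInf α' β' (shft x) with ht'def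
  have htmem : t ∈ Set.Icc (0 : ℝ) (k : ℝ) := by
    constructor
    · have := phiBInf_nonneg (α := α) hb (shft x); rw [htdef]; positivity
    · have := phiBInf_le_one (α := α) hb (shft x); rw [htdef]; linarith
  have ht'mem : t' ∈ Set.Icc (0 : ℝ) (k : ℝ) := by
    constructor
    · have := phiBInf_nonneg (α := α') hb' (shft x); rw [ht'def]; positivity
    · have := phiBInf_le_one (α := α') hb' (shft x); rw [ht'def]; linarith
  have ht't : t' ≤ t := by rw [htdef, ht'def]; linarith
  rcases hcase with ⟨h0, h1⟩ | ⟨h0, h1⟩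
  · rw [hfix] at h0 h1 ⊢
    have hstr := phiB_strict_pt k hα hα' hβ hβ' hγ hdom hstrict htmem h0 h1
    calc phiBInf α' β' x = phiB α' β' t' := hfix'
      _ ≤ phiB α' β' t := phiB_mono hb' ht't
      _ < phiB α β t := hstr
  · rw [hfix'] at h0 h1 ⊢
    have h2 : phiB α' β' t' < phiB α β t' := by
      by_contra hcc
      have heq : phiB α' β' t' = phiB α β t' := le_antisymm (hdom t' ht'mem) (not_lt.1 hcc)
      have hstr := phiB_strict_pt k hα hα' hβ hβ' hγ hdom hstrict ht'mem
        (heq ▸ h0) (heq ▸ h1)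
      rw [heq] at hstr; exact lt_irrefl _ hstr
    calc phiB α' β' t' < phiB α β t' := h2
      _ ≤ phiB α β t := phiB_mono hb ht't
      _ = phiBInf α β x := hfix.symm
end

section
/- Follower sets of the shift space Σ(u,v). Let k ≥ 2 and let u, v ∈ A^ℕ satisfy u₀ = 0, v₀ = k−1, and u ≼ σⁿu ≼ v and u ≼ σⁿv ≼ v for all n ≥ 0. Let w be a finite word over A that is a prefix of some element of Σ(u,v); let p be the length of the longest suffix u(w) of w that is a prefix of u, and q the length of the longest suffix v(w) of w that is a prefix of v. Then {x ∈ Σ(u,v) : w is a prefix of x} = {w⌢y : y ∈ Σ(u,v) and σᵖu ≼ y ≼ σᵠv}, where ⌢ denotes concatenation. Moreover, setting F_w := {y ∈ Σ(u,v) : w⌢y ∈ Σ(u,v)}: if p > q then F_w = F_{u(w)}, and if q > p then F_w = F_{v(w)}. -/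
open Filter Set

lemma shft_iter (n : ℕ) (x : ℕ → ℕ) (i : ℕ) : shft^[n] x i = x (n + i) := by
  induction n generalizing x i with
  | zero => simp
  | succ n ih =>
    rw [Function.iterate_succ_apply, ih]
    simp only [shft]
    congr 1
    omega

lemma lexLt_trans' {x y z : ℕ → ℕ} (h1 : lexLt x y) (h2 : lexLt y z) : lexLt x z := by
  obtain ⟨m1, e1, l1⟩ := h1
  obtain ⟨m2, e2, l2⟩ := h2
  refine ⟨min m1 m2, fun i hi => (e1 i (by omega)).trans (e2 i (by omega)), ?_⟩
  rcases lt_trichotomy m1 m2 with h | h | h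
  · rw [min_eq_left h.le]
    calc x m1 < y m1 := l1
      _ = z m1 := e2 m1 h
  · subst h
    rw [min_self]
    exact l1.trans l2
  · rw [min_eq_right h.le]
    calc x m2 = y m2 := e1 m2 h
      _ < z m2 := l2

lemma lexLe_trans' {x y z : ℕ → ℕ} (h1 : lexLe x y) (h2 : lexLe y z) : lexLe x z := by
  rcases h1 with rfl | h1
  · exact h2
  rcases h2 with rfl | h2
  · exact Or.inr h1
  exact Or.inr (lexLt_trans' h1 h2)

lemma lexLe_of_prefix {a b : ℕ → ℕ} (l : ℕ) (hpre : ∀ i, i < l → a i = b i)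
    (h : lexLe (shft^[l] a) (shft^[l] b)) : lexLe a b := by
  rcases h with h | ⟨m, hm, hm'⟩
  · left
    funext i
    rcases lt_or_ge i l with hi | hi
    · exact hpre i hi
    · have := congrFun h (i - l)
      rw [shft_iter, shft_iter] at this
      rwa [Nat.add_sub_cancel' hi] at this
  · right
    refine ⟨l + m, fun i hi => ?_, ?_⟩
    · rcases lt_or_ge i l with h2 | h2
      · exact hpre i h2
      · have := hm (i - l) (by omega)
        rw [shft_iter, shft_iter] at this
        rwa [Nat.add_sub_cancel' h2] at this
    · rw [shft_iter, shft_iter] at hm'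
      exact hm'

lemma lexLe_shift {a b : ℕ → ℕ} (l : ℕ) (hpre : ∀ i, i < l → a i = b i)
    (h : lexLe a b) : lexLe (shft^[l] a) (shft^[l] b) := by
  rcases h with h | ⟨m, hm, hm'⟩
  · left; rw [h]
  · have hml : l ≤ m := by
      by_contra hc
      exact absurd (hpre m (by omega)) (ne_of_lt hm')
    right
    refine ⟨m - l, fun i hi => ?_, ?_⟩
    · rw [shft_iter, shft_iter]
      exact hm _ (by omega)
    · rw [shft_iter, shft_iter, Nat.add_sub_cancel' hml]
      exact hm'

lemma shft_mem {k : ℕ} {u v x : ℕ → ℕ} (hx : x ∈ SigSet k u v) (n : ℕ) :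
    shft^[n] x ∈ SigSet k u v := by
  refine ⟨fun i => ?_, fun m => ?_⟩
  · rw [shft_iter]
    exact hx.1 _
  · rw [← Function.iterate_add_apply]
    exact hx.2 (m + n)

lemma key_lemma (k : ℕ) (u v : ℕ → ℕ)
    (hcond : ∀ n, lexLe u (shft^[n] u) ∧ lexLe (shft^[n] u) v ∧
                  lexLe u (shft^[n] v) ∧ lexLe (shft^[n] v) v)
    (N : ℕ) (w : ℕ → ℕ)
    (hwlang : ∃ x ∈ SigSet k u v, ∀ i, i < N → x i = w i)
    (p : ℕ) (hpN : p ≤ N)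
    (hpsuf : ∀ i, i < p → w (N - p + i) = u i)
    (hpmax : ∀ l, l ≤ N → (∀ i, i < l → w (N - l + i) = u i) → l ≤ p)
    (q : ℕ) (hqN : q ≤ N)
    (hqsuf : ∀ i, i < q → w (N - q + i) = v i)
    (hqmax : ∀ l, l ≤ N → (∀ i, i < l → w (N - l + i) = v i) → l ≤ q)
    (y : ℕ → ℕ) (hy : y ∈ SigSet k u v) :
    wcat N w y ∈ SigSet k u v ↔ (lexLe (shft^[p] u) y ∧ lexLe y (shft^[q] v)) := by
  obtain ⟨x₀, hx₀, hx₀w⟩ := hwlang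
  have hshftN : shft^[N] (wcat N w y) = y := by
    funext i
    rw [shft_iter]
    simp only [wcat]
    rw [if_neg (by omega)]
    congr 1
    omega
  constructor
  · intro hz
    constructor
    · have h1 : lexLe u (shft^[N - p] (wcat N w y)) := (hz.2 (N - p)).1
      have hpre : ∀ i, i < p → u i = shft^[N - p] (wcat N w y) i := by
        intro i hi
        rw [shft_iter]
        simp only [wcat]
        rw [if_pos (by omega)]
        exact (hpsuf i hi).symm
      have h2 := lexLe_shift p hpre h1
      rwa [← Function.iterate_add_apply, Nat.add_sub_cancel' hpN, hshftN] at h2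
    · have h1 : lexLe (shft^[N - q] (wcat N w y)) v := (hz.2 (N - q)).2
      have hpre : ∀ i, i < q → shft^[N - q] (wcat N w y) i = v i := by
        intro i hi
        rw [shft_iter]
        simp only [wcat]
        rw [if_pos (by omega)]
        exact hqsuf i hi
      have h2 := lexLe_shift q hpre h1
      rwa [← Function.iterate_add_apply, Nat.add_sub_cancel' hqN, hshftN] at h2
  · rintro ⟨hb1, hb2⟩
    refine ⟨fun i => ?_, fun n => ?_⟩
    · simp only [wcat]
      split
      · next h => rw [← hx₀w i h]; exact hx₀.1 i
      · exact hy.1 _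
    rcases le_or_gt N n with hn | hn
    · have heq : shft^[n] (wcat N w y) = shft^[n - N] y := by
        funext i
        rw [shft_iter, shft_iter]
        simp only [wcat]
        rw [if_neg (by omega)]
        congr 1
        omega
      rw [heq]
      exact hy.2 (n - N)
    · constructor
      · -- lower bound: u ≼ σⁿ (w ⌢ y)
        have main : (∀ i, i < N - n → w (n + i) = u i) →
            lexLe u (shft^[n] (wcat N w y)) := by
          intro hc
          have hlp : N - n ≤ p := hpmax (N - n) (by omega) (by
            intro i hi
            rw [show N - (N - n) + i = n + i by omega]
            exact hc i hi)
          have hpre : ∀ i, i < N - n →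
              shft^[p - (N - n)] u i = shft^[n] (wcat N w y) i := by
            intro i hi
            rw [shft_iter, shft_iter]
            simp only [wcat]
            rw [if_pos (by omega)]
            have h1 : w (N - p + (p - (N - n) + i)) = u (p - (N - n) + i) :=
              hpsuf _ (by omega)
            rw [show N - p + (p - (N - n) + i) = n + i by omega] at h1
            rw [h1]
          have h2 : lexLe (shft^[N - n] (shft^[p - (N - n)] u))
              (shft^[N - n] (shft^[n] (wcat N w y))) := by
            rw [← Function.iterate_add_apply, ← Function.iterate_add_apply,
              show N - n + (p - (N - n)) = p by omega,
              show N - n + n = N by omega, hshftN]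
            exact hb1
          exact lexLe_trans' (hcond (p - (N - n))).1 (lexLe_of_prefix _ hpre h2)
        rcases (hx₀.2 n).1 with heq | ⟨m, hm, hm'⟩
        · apply main
          intro i hi
          rw [← hx₀w (n + i) (by omega), heq, shft_iter]
        · rcases lt_or_ge m (N - n) with hml | hml
          · right
            refine ⟨m, fun i hi => ?_, ?_⟩
            · rw [shft_iter]
              simp only [wcat]
              rw [if_pos (by omega), ← hx₀w (n + i) (by omega)]
              have := hm i hi
              rwa [shft_iter] at this
            · rw [shft_iter]
              simp only [wcat]
              rw [if_pos (by omega), ← hx₀w (n + m) (by omega)]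
              rwa [shft_iter] at hm'
          · apply main
            intro i hi
            have h1 := hm i (by omega)
            rw [shft_iter] at h1
            rw [← hx₀w (n + i) (by omega)]
            exact h1.symm
      · -- upper bound: σⁿ (w ⌢ y) ≼ v
        have main : (∀ i, i < N - n → w (n + i) = v i) →
            lexLe (shft^[n] (wcat N w y)) v := by
          intro hc
          have hlq : N - n ≤ q := hqmax (N - n) (by omega) (by
            intro i hi
            rw [show N - (N - n) + i = n + i by omega]
            exact hc i hi)
          have hpre : ∀ i, i < N - n →
              shft^[n] (wcat N w y) i = shft^[q - (N - n)] v i := by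
            intro i hi
            rw [shft_iter, shft_iter]
            simp only [wcat]
            rw [if_pos (by omega)]
            have h1 : w (N - q + (q - (N - n) + i)) = v (q - (N - n) + i) :=
              hqsuf _ (by omega)
            rw [show N - q + (q - (N - n) + i) = n + i by omega] at h1
            rw [← h1]
          have h2 : lexLe (shft^[N - n] (shft^[n] (wcat N w y)))
              (shft^[N - n] (shft^[q - (N - n)] v)) := by
            rw [← Function.iterate_add_apply, ← Function.iterate_add_apply,
              show N - n + (q - (N - n)) = q by omega,
              show N - n + n = N by omega, hshftN]
            exact hb2
          exact lexLe_trans' (lexLe_of_prefix _ hpre h2) (hcond (q - (N - n))).2.2.2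
        rcases (hx₀.2 n).2 with heq | ⟨m, hm, hm'⟩
        · apply main
          intro i hi
          rw [← hx₀w (n + i) (by omega), ← heq, shft_iter]
        · rcases lt_or_ge m (N - n) with hml | hml
          · right
            refine ⟨m, fun i hi => ?_, ?_⟩
            · rw [shft_iter]
              simp only [wcat]
              rw [if_pos (by omega), ← hx₀w (n + i) (by omega)]
              have := hm i hi
              rwa [shft_iter] at this
            · rw [shft_iter]
              simp only [wcat]
              rw [if_pos (by omega), ← hx₀w (n + m) (by omega)]
              rwa [shft_iter] at hm'
          · apply main
            intro i hi
            have h1 := hm i (by omega)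
            rw [shft_iter] at h1
            rw [← hx₀w (n + i) (by omega)]
            exact h1

/-- **Follower sets of the shift space `Σ(u,v)`.** Let `k ≥ 2`, `u, v ∈ A^ℕ` with
`u₀ = 0`, `v₀ = k−1` and `u ≼ σⁿu ≼ v`, `u ≼ σⁿv ≼ v` for all `n ≥ 0`. Let `w` be a
word of length `N` in the language of `Σ(u,v)`, let `p` be the length of the longest
suffix of `w` that is a prefix of `u`, and `q` the length of the longest suffix of `w`
that is a prefix of `v`. Then
`{x ∈ Σ(u,v) : w prefix of x} = {w ⌢ y : y ∈ Σ(u,v), σᵖu ≼ y ≼ σ^q v}`; moreover,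
with `F_w := {y ∈ Σ(u,v) : w ⌢ y ∈ Σ(u,v)}`: if `p > q` then `F_w = F_{u(w)}`, and if
`q > p` then `F_w = F_{v(w)}` (where `u(w)`, `v(w)` are the above suffixes, i.e. the
prefixes of `u`, `v` of lengths `p`, `q`). -/
theorem follower_sets (k : ℕ) (hk : 2 ≤ k) (u v : ℕ → ℕ)
    (hu : ∀ i, u i < k) (hv : ∀ i, v i < k)
    (hu0 : u 0 = 0) (hv0 : v 0 = k - 1)
    (hcond : ∀ n, lexLe u (shft^[n] u) ∧ lexLe (shft^[n] u) v ∧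
                  lexLe u (shft^[n] v) ∧ lexLe (shft^[n] v) v)
    (N : ℕ) (w : ℕ → ℕ)
    (hwlang : ∃ x ∈ SigSet k u v, ∀ i, i < N → x i = w i)
    (p : ℕ) (hpN : p ≤ N)
    (hpsuf : ∀ i, i < p → w (N - p + i) = u i)
    (hpmax : ∀ l, l ≤ N → (∀ i, i < l → w (N - l + i) = u i) → l ≤ p)
    (q : ℕ) (hqN : q ≤ N)
    (hqsuf : ∀ i, i < q → w (N - q + i) = v i)
    (hqmax : ∀ l, l ≤ N → (∀ i, i < l → w (N - l + i) = v i) → l ≤ q) :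
    ({x | x ∈ SigSet k u v ∧ ∀ i, i < N → x i = w i} =
      {z | ∃ y ∈ SigSet k u v,
        lexLe (shft^[p] u) y ∧ lexLe y (shft^[q] v) ∧ z = wcat N w y}) ∧
    (q < p →
      {y | y ∈ SigSet k u v ∧ wcat N w y ∈ SigSet k u v} =
      {y | y ∈ SigSet k u v ∧ wcat p u y ∈ SigSet k u v}) ∧
    (p < q →
      {y | y ∈ SigSet k u v ∧ wcat N w y ∈ SigSet k u v} =
      {y | y ∈ SigSet k u v ∧ wcat q v y ∈ SigSet k u v}) := by
  have key := key_lemma k u v hcond N w hwlang p hpN hpsuf hpmax q hqN hqsuf hqmax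
  refine ⟨?_, ?_, ?_⟩
  · ext x
    simp only [Set.mem_setOf_eq]
    constructor
    · rintro ⟨hx, hpre⟩
      refine ⟨shft^[N] x, shft_mem hx N, ?_⟩
      have hxeq : wcat N w (shft^[N] x) = x := by
        funext i
        simp only [wcat]
        split
        · next h => exact (hpre i h).symm
        · next h =>
            rw [shft_iter]
            congr 1
            omega
      have hb := (key _ (shft_mem hx N)).mp (by rw [hxeq]; exact hx)
      exact ⟨hb.1, hb.2, hxeq.symm⟩
    · rintro ⟨y, hy, h1, h2, rfl⟩
      refine ⟨(key y hy).mpr ⟨h1, h2⟩, fun i hi => ?_⟩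
      simp only [wcat]
      rw [if_pos hi]
  · intro hqp
    have huS : u ∈ SigSet k u v := ⟨hu, fun n => ⟨(hcond n).1, (hcond n).2.1⟩⟩
    have key2 := key_lemma k u v hcond p u ⟨u, huS, fun i _ => rfl⟩ p le_rfl
      (fun i hi => by congr 1; omega) (fun l hl _ => hl)
      q hqp.le
      (fun i hi => by
        have h1 : w (N - p + (p - q + i)) = u (p - q + i) := hpsuf _ (by omega)
        rw [show N - p + (p - q + i) = N - q + i by omega] at h1
        rw [← h1]
        exact hqsuf i hi)
      (fun l hl hsuf => hqmax l (by omega) (fun i hi => by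
        have h1 : w (N - p + (p - l + i)) = u (p - l + i) := hpsuf _ (by omega)
        rw [show N - p + (p - l + i) = N - l + i by omega] at h1
        rw [h1]
        exact hsuf i hi))
    ext y
    simp only [Set.mem_setOf_eq]
    constructor
    · rintro ⟨hy, hz⟩
      exact ⟨hy, (key2 y hy).mpr ((key y hy).mp hz)⟩
    · rintro ⟨hy, hz⟩
      exact ⟨hy, (key y hy).mpr ((key2 y hy).mp hz)⟩
  · intro hpq
    have hvS : v ∈ SigSet k u v := ⟨hv, fun n => ⟨(hcond n).2.2.1, (hcond n).2.2.2⟩⟩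
    have key3 := key_lemma k u v hcond q v ⟨v, hvS, fun i _ => rfl⟩ p hpq.le
      (fun i hi => by
        have h1 : w (N - q + (q - p + i)) = v (q - p + i) := hqsuf _ (by omega)
        rw [show N - q + (q - p + i) = N - p + i by omega] at h1
        rw [← h1]
        exact hpsuf i hi)
      (fun l hl hsuf => hpmax l (by omega) (fun i hi => by
        have h1 : w (N - q + (q - l + i)) = v (q - l + i) := hqsuf _ (by omega)
        rw [show N - q + (q - l + i) = N - l + i by omega] at h1
        rw [h1]
        exact hsuf i hi))
      q le_rfl
      (fun i hi => by congr 1; omega) (fun l hl _ => hl)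
    ext y
    simp only [Set.mem_setOf_eq]
    constructor
    · rintro ⟨hy, hz⟩
      exact ⟨hy, (key3 y hy).mpr ((key y hy).mp hz)⟩
    · rintro ⟨hy, hz⟩
      exact ⟨hy, (key y hy).mpr ((key3 y hy).mp hz)⟩
end
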